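/- For every simplicial set Y, every edge of G(Y) is invertible as an edge of G(Y); that is, for every edge u : Δ[1] → G(Y) there exists v : bΔ[1] → G(Y) with v ∘ δ = u. -/

import Mathlib

open CategoryTheory Simplicial CategoryTheory.Limits Opposite

namespace IndexedPaper
/-- The chaotic preorder on two objects. -/
inductive TwoObj : Type where
  | zero
  | one

instance : Preorder TwoObj where
  le _ _ := True
  le_refl _ := trivial
  le_trans _ _ _ _ _ := trivial

/-- `bΔ[1]`, the nerve of the groupoid with two objects and exactly one morphism
between every ordered pair of objects. -/
def bDelta1 : SSet := CategoryTheory.nerve TwoObj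

/-- `δ : Δ[1] ⟶ bΔ[1]`, classifying the morphism from the first object to the second. -/
noncomputable def deltaB : Δ[1] ⟶ bDelta1 :=
  (SSet.yonedaEquiv (X := bDelta1) (n := ⦋1⦌)).symm
    (CategoryTheory.ComposableArrows.mk₁ (homOfLE trivial : TwoObj.zero ⟶ TwoObj.one))

/-- An edge `x : Δ[1] ⟶ X` is invertible if it extends along `δ` to `bΔ[1]`. -/
def IsInvertibleEdge {X : SSet} (x : Δ[1] ⟶ X) : Prop :=
  ∃ y : bDelta1 ⟶ X, deltaB ≫ y = x

/-- A Kan complex: every horn (`n ≥ 1`, `0 ≤ k ≤ n`) has a filler. -/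
def IsKanComplex (K : SSet) : Prop :=
  ∀ ⦃n : ℕ⦄, 1 ≤ n → ∀ (k : Fin (n + 1)) (f : (Λ[n, k] : SSet) ⟶ K),
    ∃ g : Δ[n] ⟶ K, Λ[n, k].ι ≫ g = f

/-- A Kan fibration: right lifting property with respect to all horn inclusions
(`n ≥ 1`, `0 ≤ k ≤ n`). -/
def IsKanFibration {X Y : SSet} (p : X ⟶ Y) : Prop :=
  ∀ ⦃n : ℕ⦄, 1 ≤ n → ∀ (k : Fin (n + 1)), HasLiftingProperty Λ[n, k].ι p

/-! ### Yoneda naturality lemmas -/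

lemma yE_comp {X Y : SSet} (f : X ⟶ Y) {n : SimplexCategory}
    (g : SSet.stdSimplex.obj n ⟶ X) :
    SSet.yonedaEquiv (X := Y) (n := n) (g ≫ f) = f.app (op n) (SSet.yonedaEquiv (X := X) (n := n) g) := rfl

lemma yE_symm_comp {X Y : SSet} (f : X ⟶ Y) {n : SimplexCategory} (x : X.obj (op n)) :
    (SSet.yonedaEquiv (X := Y) (n := n)).symm (f.app (op n) x) = (SSet.yonedaEquiv (X := X) (n := n)).symm x ≫ f := by
  apply (SSet.yonedaEquiv (X := Y) (n := n)).injective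
  rw [Equiv.apply_symm_apply, yE_comp, Equiv.apply_symm_apply]

lemma yE_symm_map {X : SSet} {m n : SimplexCategory} (f : m ⟶ n) (x : X.obj (op n)) :
    (SSet.yonedaEquiv (X := X) (n := m)).symm (X.map f.op x) =
      SSet.stdSimplex.map f ≫ (SSet.yonedaEquiv (X := X) (n := n)).symm x := by
  exact uliftYonedaEquiv_symm_map f.op x

/-! ### The functor `G` -/

/-- The set of simplices of `X` all of whose edges are invertible. -/
def GSet (X : SSet) (n : SimplexCategoryᵒᵖ) : Set (X.obj n) :=
  {x | ∀ e : Δ[1] ⟶ SSet.stdSimplex.obj n.unop,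
    IsInvertibleEdge (e ≫ (SSet.yonedaEquiv (X := X) (n := n.unop)).symm x)}

/-- `G X`, the simplicial subset of `X` consisting of the simplices all of whose
edges are invertible. -/
def GObj (X : SSet) : SSet where
  obj n := GSet X n
  map := fun {n m} f => TypeCat.ofHom fun x => ⟨X.map f x.1, by
    intro e
    have h := x.2 (e ≫ SSet.stdSimplex.map f.unop)
    have heq : (SSet.yonedaEquiv (X := X) (n := m.unop)).symm (X.map f x.1) =
        SSet.stdSimplex.map f.unop ≫ (SSet.yonedaEquiv (X := X) (n := n.unop)).symm x.1 :=
      yE_symm_map f.unop x.1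
    rw [heq, ← Category.assoc]
    exact h⟩
  map_id n := by
    ext x
    exact Functor.map_id_apply X n x.1
  map_comp f g := by
    ext x
    exact Functor.map_comp_apply X f g x.1

/-- `ε_X : G X ⟶ X`, the inclusion. -/
def epsilon (X : SSet) : GObj X ⟶ X where
  app n := TypeCat.ofHom fun x => x.1
  naturality _ _ _ := rfl

/-- The functorial action of `G` on a map of simplicial sets. -/
def Gmap {X Y : SSet} (f : X ⟶ Y) : GObj X ⟶ GObj Y where
  app n := TypeCat.ofHom fun x => ⟨f.app n x.1, by
    intro e
    obtain ⟨y, hy⟩ := x.2 e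
    refine ⟨y ≫ f, ?_⟩
    have : (SSet.yonedaEquiv (X := Y) (n := n.unop)).symm (f.app n x.1) =
        (SSet.yonedaEquiv (X := X) (n := n.unop)).symm x.1 ≫ f := yE_symm_comp f x.1
    simp only [this, ← Category.assoc, hy]⟩
  naturality n m g := by
    ext x
    exact Subtype.ext (by exact NatTrans.naturality_apply f g x.1)



/-- Postcomposition with a functor `F : TwoObj ⥤ TwoObj` induces a map `bΔ[1] ⟶ bΔ[1]`. -/
def bMap (F : TwoObj ⥤ TwoObj) : bDelta1 ⟶ bDelta1 where
  app _ := TypeCat.ofHom fun σ => σ ⋙ F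
  naturality _ _ _ := rfl

/-- Every edge of `bΔ[1]` is invertible in `bΔ[1]`. -/
lemma every_edge_of_bDelta1_invertible (e : Δ[1] ⟶ bDelta1) : IsInvertibleEdge e := by
  set σ : ComposableArrows TwoObj 1 := SSet.yonedaEquiv (X := bDelta1) (n := ⦋1⦌) e with hσ
  let F : TwoObj ⥤ TwoObj :=
    { obj := fun t => match t with
        | TwoObj.zero => σ.obj 0
        | TwoObj.one => σ.obj 1
      map := fun _ => homOfLE trivial
      map_id := fun _ => Subsingleton.elim _ _
      map_comp := fun _ _ => Subsingleton.elim _ _ }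
  refine ⟨bMap F, ?_⟩
  apply (SSet.yonedaEquiv (X := bDelta1) (n := ⦋1⦌)).injective
  rw [yE_comp]
  show (SSet.yonedaEquiv (X := bDelta1) (n := ⦋1⦌) deltaB) ⋙ F = σ
  rw [show SSet.yonedaEquiv (X := bDelta1) (n := ⦋1⦌) deltaB =
      CategoryTheory.ComposableArrows.mk₁ (homOfLE trivial : TwoObj.zero ⟶ TwoObj.one) from
    (SSet.yonedaEquiv (X := bDelta1) (n := ⦋1⦌)).apply_symm_apply _]
  refine CategoryTheory.Functor.ext (fun i => ?_) (fun _ _ _ => Subsingleton.elim _ _)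
  fin_cases i <;> rfl

/-- Every edge of `G Y` is invertible as an edge of `G Y`. -/
theorem every_edge_of_G_is_invertible (Y : SSet) (u : Δ[1] ⟶ GObj Y) :
    ∃ v : bDelta1 ⟶ GObj Y, deltaB ≫ v = u := by
  set x : GSet Y (op ⦋1⦌) := SSet.yonedaEquiv (X := GObj Y) (n := ⦋1⦌) u with hx
  have hux : (SSet.yonedaEquiv (X := GObj Y) (n := ⦋1⦌)).symm x = u :=
    (SSet.yonedaEquiv (X := GObj Y) (n := ⦋1⦌)).symm_apply_apply u
  have hx1 : (SSet.yonedaEquiv (X := Y) (n := ⦋1⦌)).symm x.1 = u ≫ epsilon Y := by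
    have := yE_symm_comp (epsilon Y) (x : (GObj Y).obj (op ⦋1⦌))
    rw [hux] at this
    exact this
  obtain ⟨y, hy⟩ := x.2 (𝟙 _)
  rw [Category.id_comp, hx1] at hy
  refine ⟨{ app := fun n => TypeCat.ofHom fun σ => ⟨y.app n σ, ?_⟩, naturality := ?_ }, ?_⟩
  · intro e
    have hsy : (SSet.yonedaEquiv (X := Y) (n := n.unop)).symm (y.app n σ) =
        (SSet.yonedaEquiv (X := bDelta1) (n := n.unop)).symm σ ≫ y := yE_symm_comp y σ
    rw [hsy]
    obtain ⟨E, hE⟩ := every_edge_of_bDelta1_invertible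
      (e ≫ (SSet.yonedaEquiv (X := bDelta1) (n := n.unop)).symm σ)
    exact ⟨E ≫ y, by rw [← Category.assoc, hE, Category.assoc]⟩
  · intro n m f
    ext σ
    exact Subtype.ext (by exact NatTrans.naturality_apply y f σ)
  · ext n a
    exact Subtype.ext (congrArg (fun t => t.app n a) hy)


end IndexedPaper
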